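/- The function Δ(λ, B, σ², K, δ) = 1 − λ/B − (σ²K/(λδ + σ²K))^{(σ²K + λδ)/δ²} e^{λ/δ} is monotonically nonincreasing in σ² for σ², λ, δ, B, K > 0. Specifically, ∂Δ/∂(σ²) = a·b with a = −(e^{λ/δ}/(δ²σ²))(σ²K/(λδ+σ²K))^{(λδ+σ²K)/δ²} < 0 and b = σ²K ln(σ²K/(λδ+σ²K)) + λδ ≥ 0. -/

import Mathlib

open Real

/-- The function `Δ(σ²) = 1 − λ/B − (σ²K/(λδ + σ²K))^{(σ²K + λδ)/δ²} e^{λ/δ}` is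
monotonically nonincreasing in `σ²`; its derivative is `a·b` with
`a = −(e^{λ/δ}/(δ²σ²))(σ²K/(λδ+σ²K))^{(λδ+σ²K)/δ²} < 0` and
`b = σ²K ln(σ²K/(λδ+σ²K)) + λδ ≥ 0`. -/
theorem delta_antitone_in_variance
    (lam B K δ : ℝ) (hlam : 0 < lam) (hB : 0 < B) (hδ : 0 < δ) (hK : 1 ≤ K) :
    (∀ s : ℝ, 0 < s →
      HasDerivAt
        (fun t : ℝ => 1 - lam / B -
          (t * K / (lam * δ + t * K)) ^ ((t * K + lam * δ) / δ ^ 2) *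
            Real.exp (lam / δ))
        ((-(Real.exp (lam / δ) / (δ ^ 2 * s)) *
            (s * K / (lam * δ + s * K)) ^ ((lam * δ + s * K) / δ ^ 2)) *
          (s * K * Real.log (s * K / (lam * δ + s * K)) + lam * δ)) s
      ∧ (-(Real.exp (lam / δ) / (δ ^ 2 * s)) *
            (s * K / (lam * δ + s * K)) ^ ((lam * δ + s * K) / δ ^ 2)) < 0
      ∧ 0 ≤ s * K * Real.log (s * K / (lam * δ + s * K)) + lam * δ)
    ∧ AntitoneOn
        (fun t : ℝ => 1 - lam / B -
          (t * K / (lam * δ + t * K)) ^ ((t * K + lam * δ) / δ ^ 2) *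
            Real.exp (lam / δ))
        (Set.Ioi (0 : ℝ)) := by
  have hK0 : (0:ℝ) < K := lt_of_lt_of_le one_pos hK
  have key : ∀ s : ℝ, 0 < s →
      HasDerivAt
        (fun t : ℝ => 1 - lam / B -
          (t * K / (lam * δ + t * K)) ^ ((t * K + lam * δ) / δ ^ 2) *
            Real.exp (lam / δ))
        ((-(Real.exp (lam / δ) / (δ ^ 2 * s)) *
            (s * K / (lam * δ + s * K)) ^ ((lam * δ + s * K) / δ ^ 2)) *
          (s * K * Real.log (s * K / (lam * δ + s * K)) + lam * δ)) s := by
    intro s hs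
    have hP : 0 < lam * δ + s * K := by positivity
    have hU : 0 < s * K / (lam * δ + s * K) := by positivity
    have hu : HasDerivAt (fun t : ℝ => t * K / (lam * δ + t * K))
        ((1 * K * (lam * δ + s * K) - s * K * (1 * K)) / (lam * δ + s * K) ^ 2) s :=
      ((hasDerivAt_id s).mul_const K).div
        (((hasDerivAt_id s).mul_const K).const_add (lam * δ)) (ne_of_gt hP)
    have hv : HasDerivAt (fun t : ℝ => (t * K + lam * δ) / δ ^ 2)
        (1 * K / δ ^ 2) s :=
      (((hasDerivAt_id s).mul_const K).add_const (lam * δ)).div_const (δ ^ 2)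
    have hg := (hu.rpow hv hU).mul_const (Real.exp (lam / δ))
    have hf := hg.const_sub (1 - lam / B)
    refine hf.congr_deriv ?_
    have hrw : (s * K / (lam * δ + s * K)) ^ ((s * K + lam * δ) / δ ^ 2 - 1)
        = (s * K / (lam * δ + s * K)) ^ ((s * K + lam * δ) / δ ^ 2) *
          ((lam * δ + s * K) / (s * K)) := by
      rw [Real.rpow_sub hU, Real.rpow_one, div_div_eq_mul_div, mul_div_assoc]
    have hcomm : (lam * δ + s * K) / δ ^ 2 = (s * K + lam * δ) / δ ^ 2 := by ring_nf
    rw [hcomm, hrw]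
    have hsK : s * K ≠ 0 := by positivity
    have hδ2 : δ ^ 2 ≠ 0 := by positivity
    field_simp
    ring
  refine ⟨fun s hs => ⟨key s hs, ?_, ?_⟩, ?_⟩
  · have hP : 0 < lam * δ + s * K := by positivity
    have h1 : 0 < Real.exp (lam / δ) / (δ ^ 2 * s) := by positivity
    have h2 : 0 < (s * K / (lam * δ + s * K)) ^ ((lam * δ + s * K) / δ ^ 2) :=
      Real.rpow_pos_of_pos (by positivity) _
    nlinarith
  · have hP : 0 < lam * δ + s * K := by positivity
    have hU : 0 < s * K / (lam * δ + s * K) := by positivity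
    have hlog := Real.log_le_sub_one_of_pos (show (0:ℝ) < (s * K / (lam * δ + s * K))⁻¹ by positivity)
    rw [Real.log_inv] at hlog
    have hinv : (s * K / (lam * δ + s * K))⁻¹ = (lam * δ + s * K) / (s * K) := by
      rw [inv_div]
    rw [hinv] at hlog
    have hsK : 0 < s * K := by positivity
    have h2 := mul_le_mul_of_nonneg_left hlog hsK.le
    rw [mul_sub, mul_one, mul_div_cancel₀ _ hsK.ne'] at h2
    linarith
  · apply antitoneOn_of_hasDerivWithinAt_nonpos (convex_Ioi 0)
      (f' := fun s => ((-(Real.exp (lam / δ) / (δ ^ 2 * s)) *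
            (s * K / (lam * δ + s * K)) ^ ((lam * δ + s * K) / δ ^ 2)) *
          (s * K * Real.log (s * K / (lam * δ + s * K)) + lam * δ)))
    · intro x hx
      exact (key x hx).continuousAt.continuousWithinAt
    · intro x hx
      rw [interior_Ioi] at hx
      exact (key x hx).hasDerivWithinAt
    · intro x hx
      rw [interior_Ioi] at hx
      have hx0 : (0:ℝ) < x := hx
      have hP : 0 < lam * δ + x * K := by positivity
      have h1 : 0 < Real.exp (lam / δ) / (δ ^ 2 * x) := by positivity
      have h2 : 0 < (x * K / (lam * δ + x * K)) ^ ((lam * δ + x * K) / δ ^ 2) :=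
        Real.rpow_pos_of_pos (by positivity) _
      have hU : 0 < x * K / (lam * δ + x * K) := by positivity
      have hlog := Real.log_le_sub_one_of_pos (show (0:ℝ) < (x * K / (lam * δ + x * K))⁻¹ by positivity)
      rw [Real.log_inv, inv_div] at hlog
      have hsK : 0 < x * K := by positivity
      have hb : 0 ≤ x * K * Real.log (x * K / (lam * δ + x * K)) + lam * δ := by
        have h3 := mul_le_mul_of_nonneg_left hlog hsK.le
        rw [mul_sub, mul_one, mul_div_cancel₀ _ hsK.ne'] at h3
        linarith
      have ha : (-(Real.exp (lam / δ) / (δ ^ 2 * x)) *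
            (x * K / (lam * δ + x * K)) ^ ((lam * δ + x * K) / δ ^ 2)) ≤ 0 := by nlinarith
      exact mul_nonpos_of_nonpos_of_nonneg ha hb
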